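/- Let p be a prime and let f = ∑_{n≥1} a_n t^{n-1} ∈ 𝔽_p[[t]] be a power series with coefficients a_n ∈ 𝔽_p. Then f^{(p-1)} + f^p = 0 in 𝔽_p[[t]] if and only if a_{np} = a_n for all n ≥ 1. -/

import Mathlib

open PowerSeries Finset

private lemma coeff_iter_deriv (p : ℕ) (f : PowerSeries (ZMod p)) (j n : ℕ) :
    PowerSeries.coeff (R := ZMod p) n ((fun g => PowerSeries.derivative (ZMod p) g)^[j] f)
      = PowerSeries.coeff (R := ZMod p) (n + j) f * ∏ i ∈ range j, ((n + i + 1 : ℕ) : ZMod p) := by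
  induction j generalizing f with
  | zero => simp
  | succ j ih =>
    rw [Function.iterate_succ_apply, ih, PowerSeries.coeff_derivative, prod_range_succ]
    have hc : ((n + j : ℕ) : ZMod p) + 1 = ((n + j + 1 : ℕ) : ZMod p) := by push_cast; ring
    rw [hc, mul_right_comm, mul_assoc]
    norm_num [Nat.add_assoc]

private lemma wilson_prod (p : ℕ) (hp : p.Prime) (n : ℕ) :
    (∏ i ∈ range (p - 1), ((n + i + 1 : ℕ) : ZMod p))
      = if p ∣ n then (-1 : ZMod p) else 0 := by
  haveI := Fact.mk hp
  split_ifs with h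
  · have hn : ((n : ℕ) : ZMod p) = 0 := (ZMod.natCast_eq_zero_iff n p).mpr h
    have heq : (∏ i ∈ range (p - 1), ((n + i + 1 : ℕ) : ZMod p))
        = ∏ i ∈ range (p - 1), ((i + 1 : ℕ) : ZMod p) := by
      refine prod_congr rfl fun i _ => ?_
      push_cast [hn]
      ring
    rw [heq, ← Nat.cast_prod, Finset.prod_range_add_one_eq_factorial, ZMod.wilsons_lemma]
  · have hmod := Nat.div_add_mod n p
    have hlt : n % p < p := Nat.mod_lt n hp.pos
    have hne : n % p ≠ 0 := fun h0 => h (Nat.dvd_of_mod_eq_zero h0)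
    refine Finset.prod_eq_zero (i := p - 1 - n % p) ?_ ?_
    · simp only [mem_range]; omega
    · have h2 : p * (n / p + 1) = p * (n / p) + p := by ring
      have heq : (n + (p - 1 - n % p) + 1) = p * (n / p + 1) := by
        rw [h2]
        generalize p * (n / p) = m at hmod ⊢
        omega
      rw [heq]
      push_cast [ZMod.natCast_self]
      ring
private lemma coeff_pow_p (p : ℕ) (hp : p.Prime) (f : PowerSeries (ZMod p)) (n : ℕ) :
    PowerSeries.coeff (R := ZMod p) n (f ^ p)
      = if p ∣ n then PowerSeries.coeff (R := ZMod p) (n / p) f else 0 := by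
  haveI := Fact.mk hp
  set q : Polynomial (ZMod p) := PowerSeries.trunc (n + 1) f with hq
  have h1 : PowerSeries.coeff (R := ZMod p) n (f ^ p) = (q ^ p).coeff n := by
    rw [← PowerSeries.coeff_coe_trunc_of_lt (Nat.lt_succ_self n),
      ← PowerSeries.trunc_trunc_pow,
      PowerSeries.coeff_coe_trunc_of_lt (Nat.lt_succ_self n), ← Polynomial.coe_pow,
      Polynomial.coeff_coe]
  have h2 : q.coeff (n / p) = PowerSeries.coeff (R := ZMod p) (n / p) f := by
    rw [← Polynomial.coeff_coe, PowerSeries.coeff_coe_trunc_of_lt]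
    exact Nat.lt_succ_of_le (Nat.div_le_self n p)
  rw [h1, ← Polynomial.map_frobenius_expand p, Polynomial.coeff_map,
    Polynomial.coeff_expand hp.pos]
  split_ifs with h
  · rw [h2]
    exact ZMod.pow_card _
  · exact map_zero _

/-- Let `p` be prime and `f = ∑_{n ≥ 1} a_n t^{n-1} ∈ 𝔽_p[[t]]` with `a_n ∈ 𝔽_p`.  Then
`f^{(p-1)} + f^p = 0` in `𝔽_p[[t]]` if and only if `a_{np} = a_n` for all `n ≥ 1`. -/
theorem p_curvature_zero_iff_frobenius_fixed
    (p : ℕ) (hp : p.Prime) (a : ℕ → ZMod p)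
    (f : PowerSeries (ZMod p)) (hf : f = PowerSeries.mk fun k => a (k + 1)) :
    (fun g => PowerSeries.derivative (ZMod p) g)^[p - 1] f + f ^ p = 0 ↔
      ∀ n : ℕ, 1 ≤ n → a (n * p) = a n := by
  haveI := Fact.mk hp
  have key : ∀ m : ℕ, PowerSeries.coeff (R := ZMod p) m
      ((fun g => PowerSeries.derivative (ZMod p) g)^[p - 1] f + f ^ p)
      = if p ∣ m then a (m / p + 1) - a (m + p) else 0 := by
    intro m
    rw [map_add, coeff_iter_deriv, wilson_prod p hp, coeff_pow_p p hp, hf]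
    simp only [PowerSeries.coeff_mk]
    have hmp : m + (p - 1) + 1 = m + p := by have := hp.pos; omega
    rw [hmp]
    split_ifs with h
    · ring
    · ring
  constructor
  · intro heq n hn
    have hthis := key ((n - 1) * p)
    rw [heq, map_zero] at hthis
    rw [if_pos (dvd_mul_left p (n - 1))] at hthis
    have h1 : (n - 1) * p / p = n - 1 := Nat.mul_div_cancel _ hp.pos
    have h2 : n - 1 + 1 = n := Nat.succ_pred_eq_of_pos hn
    have h3 : (n - 1) * p + p = n * p := by
      cases n with
      | zero => omega
      | succ k => simp [Nat.succ_mul]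
    rw [h1, h2, h3] at hthis
    exact (sub_eq_zero.mp hthis.symm).symm
  · intro ha
    ext m
    rw [key m, map_zero]
    split_ifs with h
    · obtain ⟨k, rfl⟩ := h
      have h1 : p * k / p = k := Nat.mul_div_cancel_left _ hp.pos
      have h2 : p * k + p = (k + 1) * p := by ring
      rw [h1, h2, ha (k + 1) (Nat.succ_le_succ (Nat.zero_le _))]
      ring
    · rfl
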